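/- Let α_1, α_2 > 0 with S = α_1 + α_2, and let f(p) = p^{α_1−1}(1−p)^{α_2−1}/B(α_1, α_2) be the Beta(α_1, α_2) density on (0,1), where B(α_1,α_2) = Γ(α_1)Γ(α_2)/Γ(S). Define h = −∫_0^1 f(p) log f(p) dp, H = −(α_1/S) log(α_1/S) − (α_2/S) log(α_2/S), and 𝔥 = −∫_0^1 p f(p) log(p f(p)) dp − ∫_0^1 (1−p) f(p) log((1−p) f(p)) dp. Then the mutual information I = h + H − 𝔥 equals (S − 2)Ψ(S) − (α_1 − 1)Ψ(α_1) − (α_2 − 1)Ψ(α_2) − (α_1/S) log(α_1/S) − (α_2/S) log(α_2/S) + (α_2 − 1)(α_1/S)[Ψ(α_2) − Ψ(S + 1)] + (α_1 − 1)(α_2/S)[Ψ(α_1) − Ψ(S + 1)] + (α_1²/S)[Ψ(α_1 + 1) − Ψ(S + 1)] + (α_2²/S)[Ψ(α_2 + 1) − Ψ(S + 1)]. -/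

import Mathlib

open MeasureTheory Real Set

/-- The digamma function `Ψ = Γ'/Γ`. -/
noncomputable def digamma (x : ℝ) : ℝ := deriv Real.Gamma x / Real.Gamma x



lemma abs_log_le_rpow {x c : ℝ} (hx : 0 < x) (hx1 : x ≤ 1) (hc : 0 < c) :
    |Real.log x| ≤ x ^ (-c) / c := by
  rw [abs_of_nonpos (Real.log_nonpos hx.le hx1)]
  have h := Real.log_le_rpow_div (inv_nonneg.2 hx.le) hc
  rw [Real.log_inv, Real.inv_rpow hx.le, ← Real.rpow_neg hx.le] at h
  linarith

lemma intBeta {a b : ℝ} (ha : 0 < a) (hb : 0 < b) :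
    IntegrableOn (fun x : ℝ => x ^ (a - 1) * (1 - x) ^ (b - 1)) (Ioo 0 1) := by
  have h := (Complex.betaIntegral_convergent (u := (a : ℂ)) (v := (b : ℂ))
      (by simpa using ha) (by simpa using hb)).1
  have h2 : IntegrableOn (fun x : ℝ => (x : ℂ) ^ ((a : ℂ) - 1) * ((1 : ℂ) - x) ^ ((b : ℂ) - 1))
      (Ioo 0 1) := h.mono_set Ioo_subset_Ioc_self
  have h3 := h2.re
  refine (integrable_congr ?_).2 h3
  refine (ae_restrict_iff' measurableSet_Ioo).2 (Filter.Eventually.of_forall fun x hx => ?_)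
  have hx0 : (0:ℝ) ≤ x := hx.1.le
  have hx1 : (0:ℝ) ≤ 1 - x := by linarith [hx.2]
  have e1 : ((x : ℂ)) ^ ((a : ℂ) - 1) = ((x ^ (a - 1) : ℝ) : ℂ) := by
    rw [Complex.ofReal_cpow hx0]; push_cast; ring_nf
  have e2 : ((1 : ℂ) - x) ^ ((b : ℂ) - 1) = (((1 - x) ^ (b - 1) : ℝ) : ℂ) := by
    rw [show ((1:ℂ) - x) = (((1 - x : ℝ)) : ℂ) by push_cast; ring, Complex.ofReal_cpow hx1]
    push_cast; ring_nf
  simp [e1, e2, ← Complex.ofReal_mul]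


lemma contBeta (a b : ℝ) :
    ContinuousOn (fun x : ℝ => x ^ (a - 1) * (1 - x) ^ (b - 1)) (Ioo 0 1) := by
  intro x hx
  have h1 : ContinuousAt (fun x : ℝ => x ^ (a - 1)) x :=
    Real.continuousAt_rpow_const x _ (Or.inl hx.1.ne')
  have h2 : ContinuousAt (fun x : ℝ => (1 - x) ^ (b - 1)) x := by
    have : ContinuousAt (fun y : ℝ => y ^ (b - 1)) (1 - x) :=
      Real.continuousAt_rpow_const _ _ (Or.inl (by have := hx.2; intro h; linarith [h.symm] ))
    exact this.comp (continuous_const.sub continuous_id).continuousAt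
  exact (h1.mul h2).continuousWithinAt

lemma contLogL : ContinuousOn Real.log (Ioo (0:ℝ) 1) := fun x hx =>
  (Real.continuousAt_log hx.1.ne').continuousWithinAt

lemma contLogR : ContinuousOn (fun x : ℝ => Real.log (1 - x)) (Ioo (0:ℝ) 1) := fun x hx =>
  ((Real.continuousAt_log (sub_ne_zero.mpr hx.2.ne')).comp
    (continuous_const.sub continuous_id).continuousAt).continuousWithinAt

lemma intBetaLogL {a b : ℝ} (ha : 0 < a) (hb : 0 < b) :
    IntegrableOn (fun x : ℝ => x ^ (a - 1) * (1 - x) ^ (b - 1) * Real.log x) (Ioo 0 1) := by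
  have hbase := (intBeta (half_pos ha) hb).const_mul (2 / a)
  refine Integrable.mono hbase
    (((contBeta a b).mul contLogL).aestronglyMeasurable measurableSet_Ioo) ?_
  refine (ae_restrict_iff' measurableSet_Ioo).2 (Filter.Eventually.of_forall fun x hx => ?_)
  have hx0 : 0 < x := hx.1
  have hx1 : 0 < 1 - x := by linarith [hx.2]
  have hL : |Real.log x| ≤ x ^ (-(a/2)) / (a/2) := abs_log_le_rpow hx0 hx.2.le (half_pos ha)
  rw [Real.norm_eq_abs, Real.norm_eq_abs, abs_mul,
    abs_of_pos (by positivity : (0:ℝ) < x ^ (a-1) * (1-x)^(b-1))]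
  have key : x ^ (a - 1) * (1 - x) ^ (b - 1) * |Real.log x|
      ≤ x ^ (a - 1) * (1 - x) ^ (b - 1) * (x ^ (-(a/2)) / (a/2)) := by gcongr
  refine key.trans (le_of_eq ?_)
  rw [abs_of_pos (by positivity)]
  rw [show x ^ (a-1) * (1-x)^(b-1) * (x ^ (-(a/2)) / (a/2))
      = (x ^ (a-1) * x ^ (-(a/2))) * (1-x)^(b-1) / (a/2) by ring,
    ← Real.rpow_add hx0, show a - 1 + -(a/2) = a/2 - 1 by ring]
  field_simp

lemma intBetaLogR {a b : ℝ} (ha : 0 < a) (hb : 0 < b) :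
    IntegrableOn (fun x : ℝ => x ^ (a - 1) * (1 - x) ^ (b - 1) * Real.log (1 - x)) (Ioo 0 1) := by
  have hbase := (intBeta ha (half_pos hb)).const_mul (2 / b)
  refine Integrable.mono hbase
    (((contBeta a b).mul contLogR).aestronglyMeasurable measurableSet_Ioo) ?_
  refine (ae_restrict_iff' measurableSet_Ioo).2 (Filter.Eventually.of_forall fun x hx => ?_)
  have hx0 : 0 < x := hx.1
  have hx1 : 0 < 1 - x := by linarith [hx.2]
  have hL : |Real.log (1-x)| ≤ (1-x) ^ (-(b/2)) / (b/2) :=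
    abs_log_le_rpow hx1 (by linarith) (half_pos hb)
  rw [Real.norm_eq_abs, Real.norm_eq_abs, abs_mul,
    abs_of_pos (by positivity : (0:ℝ) < x ^ (a-1) * (1-x)^(b-1))]
  have key : x ^ (a - 1) * (1 - x) ^ (b - 1) * |Real.log (1-x)|
      ≤ x ^ (a - 1) * (1 - x) ^ (b - 1) * ((1-x) ^ (-(b/2)) / (b/2)) := by gcongr
  refine key.trans (le_of_eq ?_)
  rw [abs_of_pos (by positivity)]
  rw [show x ^ (a-1) * (1-x)^(b-1) * ((1-x) ^ (-(b/2)) / (b/2))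
      = x ^ (a-1) * ((1-x)^(b-1) * (1-x) ^ (-(b/2))) / (b/2) by ring,
    ← Real.rpow_add hx1, show b - 1 + -(b/2) = b/2 - 1 by ring]
  field_simp

lemma J_eq {a b : ℝ} (ha : 0 < a) (hb : 0 < b) :
    ∫ x in Ioo (0:ℝ) 1, x ^ (a - 1) * (1 - x) ^ (b - 1)
      = Real.Gamma a * Real.Gamma b / Real.Gamma (a + b) := by
  have step : (∫ t in Ioo (0:ℝ) 1, (t:ℂ) ^ ((a:ℂ) - 1) * ((1:ℂ) - t) ^ ((b:ℂ) - 1))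
      = ∫ t in Ioo (0:ℝ) 1, ((t ^ (a - 1) * (1 - t) ^ (b - 1) : ℝ) : ℂ) := by
    refine setIntegral_congr_fun measurableSet_Ioo fun x hx => ?_
    have hx0 : (0:ℝ) ≤ x := hx.1.le
    have hx1 : (0:ℝ) ≤ 1 - x := by linarith [hx.2]
    have e1 : ((x : ℂ)) ^ ((a : ℂ) - 1) = ((x ^ (a - 1) : ℝ) : ℂ) := by
      rw [Complex.ofReal_cpow hx0]; push_cast; ring_nf
    have e2 : ((1 : ℂ) - x) ^ ((b : ℂ) - 1) = (((1 - x) ^ (b - 1) : ℝ) : ℂ) := by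
      rw [show ((1:ℂ) - x) = (((1 - x : ℝ)) : ℂ) by push_cast; ring, Complex.ofReal_cpow hx1]
      push_cast; ring_nf
    rw [e1, e2, ← Complex.ofReal_mul]
  have key : Complex.betaIntegral (a : ℂ) (b : ℂ)
      = ((∫ x in Ioo (0:ℝ) 1, x ^ (a - 1) * (1 - x) ^ (b - 1) : ℝ) : ℂ) := by
    rw [Complex.betaIntegral, intervalIntegral.integral_of_le zero_le_one,
      integral_Ioc_eq_integral_Ioo, step]
    exact integral_ofReal
  have h := Complex.Gamma_mul_Gamma_eq_betaIntegral
    (s := (a:ℂ)) (t := (b:ℂ)) (by simpa using ha) (by simpa using hb)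
  rw [key] at h
  have hab : (0:ℝ) < a + b := by linarith
  rw [show ((a:ℂ) + b) = ((a + b : ℝ) : ℂ) by push_cast; ring] at h
  rw [Complex.Gamma_ofReal, Complex.Gamma_ofReal, Complex.Gamma_ofReal] at h
  have hre : Real.Gamma a * Real.Gamma b
      = Real.Gamma (a+b) * ∫ x in Ioo (0:ℝ) 1, x ^ (a - 1) * (1 - x) ^ (b - 1) := by
    exact_mod_cast h
  have hG : Real.Gamma (a+b) ≠ 0 := (Real.Gamma_pos_of_pos hab).ne'
  field_simp
  linarith [hre]



lemma Gamma_ne_zero_of_pos {x : ℝ} (hx : 0 < x) : Real.Gamma x ≠ 0 :=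
  (Real.Gamma_pos_of_pos hx).ne'

lemma diffGamma {x : ℝ} (hx : 0 < x) : DifferentiableAt ℝ Real.Gamma x :=
  Real.differentiableAt_Gamma fun m =>
    ((lt_of_le_of_lt (neg_nonpos.mpr m.cast_nonneg) hx).ne')

lemma hasDerivAt_J {a b : ℝ} (ha : 0 < a) (hb : 0 < b) :
    HasDerivAt (fun t => ∫ x in Ioo (0:ℝ) 1, x ^ (t - 1) * (1 - x) ^ (b - 1))
      (∫ x in Ioo (0:ℝ) 1, x ^ (a - 1) * (1 - x) ^ (b - 1) * Real.log x) a := by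
  have hεpos : 0 < a / 4 := by linarith
  have main := hasDerivAt_integral_of_dominated_loc_of_deriv_le
    (F := fun t x => x ^ (t - 1) * (1 - x) ^ (b - 1))
    (F' := fun t x => x ^ (t - 1) * (1 - x) ^ (b - 1) * Real.log x)
    (x₀ := a)
    (bound := fun x => (4 / a) * (x ^ (a / 2 - 1) * (1 - x) ^ (b - 1)))
    (μ := volume.restrict (Ioo 0 1)) (Metric.ball_mem_nhds a hεpos)
    (Filter.Eventually.of_forall fun t =>
      (contBeta t b).aestronglyMeasurable measurableSet_Ioo)
    (intBeta ha hb)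
    (((contBeta a b).mul contLogL).aestronglyMeasurable measurableSet_Ioo)
    ?_ ((intBeta (by linarith : (0:ℝ) < a / 2) hb).const_mul _) ?_
  · exact main.2
  · -- bound
    refine (ae_restrict_iff' measurableSet_Ioo).2 (Filter.Eventually.of_forall fun x hx => ?_)
    intro t ht
    have hx0 : 0 < x := hx.1
    have hx1 : 0 < 1 - x := by linarith [hx.2]
    have htl : 3 / 4 * a - 1 ≤ t - 1 := by
      rw [Metric.mem_ball, Real.dist_eq] at ht
      have := abs_lt.mp ht
      linarith [this.1]
    have h1 : x ^ (t - 1) ≤ x ^ (3 / 4 * a - 1) :=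
      Real.rpow_le_rpow_of_exponent_ge hx0 hx.2.le htl
    have hL : |Real.log x| ≤ x ^ (-(a / 4)) / (a / 4) :=
      abs_log_le_rpow hx0 hx.2.le (by linarith)
    rw [Real.norm_eq_abs, abs_mul, abs_mul,
      abs_of_pos (Real.rpow_pos_of_pos hx0 _), abs_of_pos (Real.rpow_pos_of_pos hx1 _)]
    calc x ^ (t - 1) * (1 - x) ^ (b - 1) * |Real.log x|
        ≤ x ^ (3 / 4 * a - 1) * (1 - x) ^ (b - 1) * (x ^ (-(a / 4)) / (a / 4)) := by
          have h2 : (0:ℝ) ≤ (1 - x) ^ (b - 1) := (Real.rpow_pos_of_pos hx1 _).le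
          have h3 : (0:ℝ) ≤ x ^ (t-1) := (Real.rpow_pos_of_pos hx0 _).le
          apply mul_le_mul (mul_le_mul h1 le_rfl h2 (by positivity)) hL (abs_nonneg _)
          positivity
      _ = (4 / a) * (x ^ (a / 2 - 1) * (1 - x) ^ (b - 1)) := by
          rw [show x ^ (3/4*a-1) * (1-x)^(b-1) * (x ^ (-(a/4)) / (a/4))
              = (x ^ (3/4*a-1) * x ^ (-(a/4))) * (1-x)^(b-1) / (a/4) by ring,
            ← Real.rpow_add hx0, show 3/4*a - 1 + -(a/4) = a/2 - 1 by ring]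
          field_simp
  · -- differentiability
    refine (ae_restrict_iff' measurableSet_Ioo).2 (Filter.Eventually.of_forall fun x hx => ?_)
    intro t ht
    have hx0 : 0 < x := hx.1
    have h1 : HasDerivAt (fun t : ℝ => x ^ (t - 1)) (x ^ (t - 1) * Real.log x) t := by
      have h0 := (Real.hasStrictDerivAt_const_rpow hx0 (t - 1)).hasDerivAt
      have h2 := HasDerivAt.comp t h0 ((hasDerivAt_id t).sub_const 1)
      rw [mul_one] at h2
      exact h2
    have := h1.mul_const ((1 - x) ^ (b - 1))
    convert this using 1
    · rfl
    ring

lemma L_eq {a b : ℝ} (ha : 0 < a) (hb : 0 < b) :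
    ∫ x in Ioo (0:ℝ) 1, x ^ (a - 1) * (1 - x) ^ (b - 1) * Real.log x
      = Real.Gamma a * Real.Gamma b / Real.Gamma (a + b) * (digamma a - digamma (a + b)) := by
  have hab : (0:ℝ) < a + b := by linarith
  have hGa := (diffGamma ha).hasDerivAt
  have hGab : HasDerivAt (fun t : ℝ => Real.Gamma (t + b)) (deriv Real.Gamma (a + b)) a := by
    have := HasDerivAt.comp a (diffGamma hab).hasDerivAt ((hasDerivAt_id a).add_const b)
    rw [mul_one] at this
    exact this
  have h2 : HasDerivAt (fun t : ℝ => Real.Gamma t * Real.Gamma b / Real.Gamma (t + b))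
      ((deriv Real.Gamma a * Real.Gamma b * Real.Gamma (a + b)
        - Real.Gamma a * Real.Gamma b * deriv Real.Gamma (a + b)) / Real.Gamma (a + b) ^ 2) a :=
    (hGa.mul_const (Real.Gamma b)).div hGab (Gamma_ne_zero_of_pos hab)
  have heq : (fun t => ∫ x in Ioo (0:ℝ) 1, x ^ (t - 1) * (1 - x) ^ (b - 1))
      =ᶠ[nhds a] (fun t : ℝ => Real.Gamma t * Real.Gamma b / Real.Gamma (t + b)) := by
    filter_upwards [isOpen_Ioi.mem_nhds (show a ∈ Ioi (0:ℝ) from ha)] with t ht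
    exact J_eq ht hb
  have h3 := h2.congr_of_eventuallyEq heq
  have h4 := (hasDerivAt_J ha hb).unique h3
  rw [h4, digamma, digamma]
  have g1 := Gamma_ne_zero_of_pos ha
  have gab := Gamma_ne_zero_of_pos hab
  field_simp

lemma symmIoo (g : ℝ → ℝ) :
    ∫ x in Ioo (0:ℝ) 1, g (1 - x) = ∫ x in Ioo (0:ℝ) 1, g x := by
  rw [← integral_Ioc_eq_integral_Ioo, ← integral_Ioc_eq_integral_Ioo,
    ← intervalIntegral.integral_of_le zero_le_one, ← intervalIntegral.integral_of_le zero_le_one]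
  simpa using intervalIntegral.integral_comp_sub_left g 1

lemma L'_eq {a b : ℝ} (ha : 0 < a) (hb : 0 < b) :
    ∫ x in Ioo (0:ℝ) 1, x ^ (a - 1) * (1 - x) ^ (b - 1) * Real.log (1 - x)
      = Real.Gamma a * Real.Gamma b / Real.Gamma (a + b) * (digamma b - digamma (a + b)) := by
  have h := symmIoo (fun y => (1 - y) ^ (a - 1) * y ^ (b - 1) * Real.log y)
  simp only [sub_sub_cancel] at h
  rw [h, show (fun y : ℝ => (1 - y) ^ (a - 1) * y ^ (b - 1) * Real.log y)
      = fun y : ℝ => y ^ (b - 1) * (1 - y) ^ (a - 1) * Real.log y from funext fun y => by ring,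
    L_eq hb ha, add_comm b a, mul_comm (Real.Gamma b) (Real.Gamma a)]



lemma K_eq {a b : ℝ} (ha : 0 < a) (hb : 0 < b) (c₁ c₂ c₃ : ℝ) :
    ∫ x in Ioo (0:ℝ) 1,
        x ^ (a - 1) * (1 - x) ^ (b - 1) * (c₁ * Real.log x + c₂ * Real.log (1 - x) + c₃)
      = Real.Gamma a * Real.Gamma b / Real.Gamma (a + b) *
        (c₁ * (digamma a - digamma (a + b)) + c₂ * (digamma b - digamma (a + b)) + c₃) := by
  have hsplit : (fun x : ℝ =>
      x ^ (a - 1) * (1 - x) ^ (b - 1) * (c₁ * Real.log x + c₂ * Real.log (1 - x) + c₃))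
      = fun x : ℝ => c₁ * (x ^ (a - 1) * (1 - x) ^ (b - 1) * Real.log x)
        + (c₂ * (x ^ (a - 1) * (1 - x) ^ (b - 1) * Real.log (1 - x))
          + c₃ * (x ^ (a - 1) * (1 - x) ^ (b - 1))) := funext fun x => by ring
  rw [hsplit, integral_add ((intBetaLogL ha hb).const_mul c₁)
      (show Integrable (fun x : ℝ => c₂ * (x ^ (a - 1) * (1 - x) ^ (b - 1) * Real.log (1 - x))
          + c₃ * (x ^ (a - 1) * (1 - x) ^ (b - 1))) (volume.restrict (Ioo 0 1)) from
        ((intBetaLogR ha hb).const_mul c₂).add ((intBeta ha hb).const_mul c₃))]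
  rw [integral_add ((intBetaLogR ha hb).const_mul c₂) ((intBeta ha hb).const_mul c₃),
    integral_const_mul, integral_const_mul, integral_const_mul,
    L_eq ha hb, L'_eq ha hb, J_eq ha hb]
  ring

theorem analytic_mutual_information_beta
    (α₁ α₂ : ℝ) (hα₁ : 0 < α₁) (hα₂ : 0 < α₂)
    (S : ℝ) (hS : S = α₁ + α₂)
    (B : ℝ) (hB : B = Real.Gamma α₁ * Real.Gamma α₂ / Real.Gamma S)
    (f : ℝ → ℝ) (hf : ∀ p, f p = p ^ (α₁ - 1) * (1 - p) ^ (α₂ - 1) / B)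
    (h H 𝔥 I : ℝ)
    (hh : h = -∫ p in Set.Ioo (0 : ℝ) 1, f p * Real.log (f p))
    (hH : H = -(α₁ / S) * Real.log (α₁ / S) - (α₂ / S) * Real.log (α₂ / S))
    (hJ : 𝔥 = (-∫ p in Set.Ioo (0 : ℝ) 1, p * f p * Real.log (p * f p))
        - ∫ p in Set.Ioo (0 : ℝ) 1, (1 - p) * f p * Real.log ((1 - p) * f p))
    (hI : I = h + H - 𝔥) :
    I = (S - 2) * digamma S - (α₁ - 1) * digamma α₁ - (α₂ - 1) * digamma α₂
      - (α₁ / S) * Real.log (α₁ / S) - (α₂ / S) * Real.log (α₂ / S)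
      + (α₂ - 1) * (α₁ / S) * (digamma α₂ - digamma (S + 1))
      + (α₁ - 1) * (α₂ / S) * (digamma α₁ - digamma (S + 1))
      + (α₁ ^ 2 / S) * (digamma (α₁ + 1) - digamma (S + 1))
      + (α₂ ^ 2 / S) * (digamma (α₂ + 1) - digamma (S + 1)) := by
  subst hS
  have g1 : 0 < Real.Gamma α₁ := Real.Gamma_pos_of_pos hα₁
  have g2 : 0 < Real.Gamma α₂ := Real.Gamma_pos_of_pos hα₂
  have gS : 0 < Real.Gamma (α₁ + α₂) := Real.Gamma_pos_of_pos (by linarith)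
  have hB0 : 0 < B := by rw [hB]; exact div_pos (mul_pos g1 g2) gS
  have hS0 : (0:ℝ) < α₁ + α₂ := by linarith
  -- T1
  have hT1 : (∫ p in Ioo (0:ℝ) 1, f p * Real.log (f p))
      = Real.Gamma α₁ * Real.Gamma α₂ / Real.Gamma (α₁ + α₂) *
        ((α₁ - 1) / B * (digamma α₁ - digamma (α₁ + α₂))
          + (α₂ - 1) / B * (digamma α₂ - digamma (α₁ + α₂)) + (-Real.log B / B)) := by
    rw [setIntegral_congr_fun measurableSet_Ioo
      (g := fun p : ℝ => p ^ (α₁ - 1) * (1 - p) ^ (α₂ - 1) *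
        ((α₁ - 1) / B * Real.log p + (α₂ - 1) / B * Real.log (1 - p) + (-Real.log B / B)))
      (fun p hp => ?_), K_eq hα₁ hα₂]
    have hp0 : 0 < p := hp.1
    have hp1 : 0 < 1 - p := by have := hp.2; linarith
    have r1 : 0 < p ^ (α₁ - 1) := Real.rpow_pos_of_pos hp0 _
    have r2 : 0 < (1 - p) ^ (α₂ - 1) := Real.rpow_pos_of_pos hp1 _
    simp only [hf]
    rw [Real.log_div (by positivity) hB0.ne', Real.log_mul r1.ne' r2.ne',
      Real.log_rpow hp0, Real.log_rpow hp1]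
    field_simp
    ring
  -- T2
  have hT2 : (∫ p in Ioo (0:ℝ) 1, p * f p * Real.log (p * f p))
      = Real.Gamma (α₁ + 1) * Real.Gamma α₂ / Real.Gamma (α₁ + 1 + α₂) *
        (α₁ / B * (digamma (α₁ + 1) - digamma (α₁ + 1 + α₂))
          + (α₂ - 1) / B * (digamma α₂ - digamma (α₁ + 1 + α₂)) + (-Real.log B / B)) := by
    rw [setIntegral_congr_fun measurableSet_Ioo
      (g := fun p : ℝ => p ^ (α₁ + 1 - 1) * (1 - p) ^ (α₂ - 1) *
        (α₁ / B * Real.log p + (α₂ - 1) / B * Real.log (1 - p) + (-Real.log B / B)))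
      (fun p hp => ?_), K_eq (by linarith : (0:ℝ) < α₁ + 1) hα₂]
    have hp0 : 0 < p := hp.1
    have hp1 : 0 < 1 - p := by have := hp.2; linarith
    have r1 : 0 < p ^ (α₁ - 1) := Real.rpow_pos_of_pos hp0 _
    have r2 : 0 < (1 - p) ^ (α₂ - 1) := Real.rpow_pos_of_pos hp1 _
    have hpow : p ^ (α₁ + 1 - 1) = p * p ^ (α₁ - 1) := by
      rw [show α₁ + 1 - 1 = 1 + (α₁ - 1) by ring, Real.rpow_add hp0, Real.rpow_one]
    simp only [hf]
    rw [show p * (p ^ (α₁ - 1) * (1 - p) ^ (α₂ - 1) / B)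
        = p ^ (α₁ + 1 - 1) * (1 - p) ^ (α₂ - 1) / B by rw [hpow]; ring]
    have r1' : 0 < p ^ (α₁ + 1 - 1) := Real.rpow_pos_of_pos hp0 _
    rw [Real.log_div (by positivity) hB0.ne', Real.log_mul r1'.ne' r2.ne',
      Real.log_rpow hp0, Real.log_rpow hp1]
    field_simp
    ring
  -- T3
  have hT3 : (∫ p in Ioo (0:ℝ) 1, (1 - p) * f p * Real.log ((1 - p) * f p))
      = Real.Gamma α₁ * Real.Gamma (α₂ + 1) / Real.Gamma (α₁ + (α₂ + 1)) *
        ((α₁ - 1) / B * (digamma α₁ - digamma (α₁ + (α₂ + 1)))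
          + α₂ / B * (digamma (α₂ + 1) - digamma (α₁ + (α₂ + 1))) + (-Real.log B / B)) := by
    rw [setIntegral_congr_fun measurableSet_Ioo
      (g := fun p : ℝ => p ^ (α₁ - 1) * (1 - p) ^ (α₂ + 1 - 1) *
        ((α₁ - 1) / B * Real.log p + α₂ / B * Real.log (1 - p) + (-Real.log B / B)))
      (fun p hp => ?_), K_eq hα₁ (by linarith : (0:ℝ) < α₂ + 1)]
    have hp0 : 0 < p := hp.1
    have hp1 : 0 < 1 - p := by have := hp.2; linarith
    have r1 : 0 < p ^ (α₁ - 1) := Real.rpow_pos_of_pos hp0 _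
    have r2 : 0 < (1 - p) ^ (α₂ - 1) := Real.rpow_pos_of_pos hp1 _
    have hpow : (1 - p) ^ (α₂ + 1 - 1) = (1 - p) * (1 - p) ^ (α₂ - 1) := by
      rw [show α₂ + 1 - 1 = 1 + (α₂ - 1) by ring, Real.rpow_add hp1, Real.rpow_one]
    simp only [hf]
    rw [show (1 - p) * (p ^ (α₁ - 1) * (1 - p) ^ (α₂ - 1) / B)
        = p ^ (α₁ - 1) * (1 - p) ^ (α₂ + 1 - 1) / B by rw [hpow]; ring]
    have r2' : 0 < (1 - p) ^ (α₂ + 1 - 1) := Real.rpow_pos_of_pos hp1 _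
    rw [Real.log_div (by positivity) hB0.ne', Real.log_mul r1.ne' r2'.ne',
      Real.log_rpow hp0, Real.log_rpow hp1]
    field_simp
    ring
  rw [hI, hh, hH, hJ, hT1, hT2, hT3]
  rw [Real.Gamma_add_one hα₁.ne', Real.Gamma_add_one hα₂.ne',
    show α₁ + 1 + α₂ = (α₁ + α₂) + 1 by ring, show α₁ + (α₂ + 1) = (α₁ + α₂) + 1 by ring,
    Real.Gamma_add_one hS0.ne']
  subst hB
  field_simp
  ring
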